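/- arXiv:2004.00544 — 3 statements merged into one kernel-verified Lean document; each statement's English description precedes it below -/
import Mathlib

section
/- Let N ≥ 1 and let α : Fin N → ℕ satisfy α i ≥ 1 for all i, and suppose α j ≥ 2 for some index j. Phase space consists of pairs (Q, P) where Q, P : Π i, Fin (α i) → ℝ. Let χ : (Π i, Fin (α i) → ℝ) → (Fin N → ℝ) → (Fin N → ℝ) and L : (Π i, Fin (α i) → ℝ) → (Fin N → ℝ) → ℝ be arbitrary functions, and write Pᵗᵒᵖ for the family i ↦ P i (α i − 1) of highest momenta. Define H(Q, P) = Σᵢ Σ_{k : k+1 < α i} (P i k)·(Q i (k+1)) + Σᵢ (P i (α i − 1))·(χ Q Pᵗᵒᵖ i) − L Q (χ Q Pᵗᵒᵖ). Then H is unbounded below and unbounded above on phase space. -/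
open Finset in
/-- The Ostrogradsky canonical Hamiltonian for `N` degrees of freedom where the
Lagrangian depends on derivatives of `qᵢ` up to order `αᵢ`:
`H(Q,P) = Σᵢ Σ_{k+1 < αᵢ} Pᵢᵏ·Qᵢᵏ⁺¹ + Σᵢ Pᵢ^{αᵢ−1}·χᵢ(Q, Pᵗᵒᵖ) − L(Q, χ(Q, Pᵗᵒᵖ))`. -/
noncomputable def ostrogradskyHamiltonian (N : ℕ) (α : Fin N → ℕ) (hα : ∀ i, 1 ≤ α i)
    (χ : (∀ i, Fin (α i) → ℝ) → (Fin N → ℝ) → (Fin N → ℝ))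
    (L : (∀ i, Fin (α i) → ℝ) → (Fin N → ℝ) → ℝ)
    (Q P : ∀ i, Fin (α i) → ℝ) : ℝ :=
  (∑ i, ∑ k : Fin (α i),
      if h : (k : ℕ) + 1 < α i then P i k * Q i ⟨(k : ℕ) + 1, h⟩ else 0)
  + (∑ i, P i ⟨α i - 1, Nat.sub_lt (lt_of_lt_of_le Nat.zero_lt_one (hα i)) Nat.one_pos⟩
        * χ Q (fun j => P j ⟨α j - 1, Nat.sub_lt (lt_of_lt_of_le Nat.zero_lt_one (hα j)) Nat.one_pos⟩) i)
  - L Q (fun j => P j ⟨α j - 1, Nat.sub_lt (lt_of_lt_of_le Nat.zero_lt_one (hα j)) Nat.one_pos⟩)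

open Finset in
theorem ostrogradsky_key (N : ℕ) (α : Fin N → ℕ)
    (hα : ∀ i, 1 ≤ α i) (j : Fin N) (hj : 2 ≤ α j)
    (χ : (∀ i, Fin (α i) → ℝ) → (Fin N → ℝ) → (Fin N → ℝ))
    (L : (∀ i, Fin (α i) → ℝ) → (Fin N → ℝ) → ℝ) (t : ℝ) :
    ostrogradskyHamiltonian N α hα χ L
      (fun i k => if i = j ∧ (k : ℕ) = 1 then (1 : ℝ) else 0)
      (fun i k => if i = j ∧ (k : ℕ) = 0 then t else 0)
    = t - L (fun i k => if i = j ∧ (k : ℕ) = 1 then (1 : ℝ) else 0) 0 := by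
  set Q0 : ∀ i, Fin (α i) → ℝ := fun i k => if i = j ∧ (k : ℕ) = 1 then (1 : ℝ) else 0 with hQ0
  set P0 : ∀ i, Fin (α i) → ℝ := fun i k => if i = j ∧ (k : ℕ) = 0 then t else 0 with hP0
  have htop : (fun j' => P0 j' ⟨α j' - 1,
      Nat.sub_lt (lt_of_lt_of_le Nat.zero_lt_one (hα j')) Nat.one_pos⟩) = (0 : Fin N → ℝ) := by
    funext i
    simp only [hP0]
    rw [if_neg]
    · rfl
    · rintro ⟨rfl, h0⟩
      exact (by omega : ¬ (α i - 1 = 0)) h0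
  unfold ostrogradskyHamiltonian
  rw [htop]
  have h2 : (∑ i, P0 i ⟨α i - 1,
      Nat.sub_lt (lt_of_lt_of_le Nat.zero_lt_one (hα i)) Nat.one_pos⟩ * χ Q0 0 i) = 0 := by
    apply Finset.sum_eq_zero
    intro i _
    have : P0 i ⟨α i - 1, Nat.sub_lt (lt_of_lt_of_le Nat.zero_lt_one (hα i)) Nat.one_pos⟩ = 0 :=
      congrFun htop i
    rw [this, zero_mul]
  rw [h2]
  have h1 : (∑ i, ∑ k : Fin (α i),
      if h : (k : ℕ) + 1 < α i then P0 i k * Q0 i ⟨(k : ℕ) + 1, h⟩ else 0) = t := by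
    rw [Finset.sum_eq_single j]
    · rw [Finset.sum_eq_single (⟨0, by omega⟩ : Fin (α j))]
      · rw [dif_pos (by omega : (0 : ℕ) + 1 < α j)]
        simp [hP0, hQ0]
      · intro k _ hk
        have hk0 : (k : ℕ) ≠ 0 := by
          intro h
          apply hk; exact Fin.ext h
        split
        · have : P0 j k = 0 := by simp [hP0, hk0]
          rw [this, zero_mul]
        · rfl
      · intro h; exact absurd (Finset.mem_univ _) h
    · intro i _ hi
      apply Finset.sum_eq_zero
      intro k _
      split
      · have : P0 i k = 0 := by simp [hP0, hi]
        rw [this, zero_mul]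
      · rfl
    · intro h; exact absurd (Finset.mem_univ _) h
  rw [h1]
  ring

/-- Ostrogradsky's instability theorem for `N ≥ 1` degrees of freedom, with
derivative orders `α i ≥ 1` and at least one `α j ≥ 2`: the canonical
Hamiltonian is unbounded below and unbounded above on phase space. -/
theorem ostrogradsky_unbounded (N : ℕ) (hN : 1 ≤ N) (α : Fin N → ℕ)
    (hα : ∀ i, 1 ≤ α i) (j : Fin N) (hj : 2 ≤ α j)
    (χ : (∀ i, Fin (α i) → ℝ) → (Fin N → ℝ) → (Fin N → ℝ))
    (L : (∀ i, Fin (α i) → ℝ) → (Fin N → ℝ) → ℝ) :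
    ∀ M : ℝ,
      (∃ Q P : ∀ i, Fin (α i) → ℝ, ostrogradskyHamiltonian N α hα χ L Q P < M) ∧
      (∃ Q P : ∀ i, Fin (α i) → ℝ, ostrogradskyHamiltonian N α hα χ L Q P > M) := by
  intro M
  set Q0 : ∀ i, Fin (α i) → ℝ := fun i k => if i = j ∧ (k : ℕ) = 1 then (1 : ℝ) else 0 with hQ0
  set C : ℝ := L Q0 0 with hC
  constructor
  · refine ⟨Q0, fun i k => if i = j ∧ (k : ℕ) = 0 then M + C - 1 else 0, ?_⟩
    rw [ostrogradsky_key N α hα j hj χ L (M + C - 1)]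
    linarith
  · refine ⟨Q0, fun i k => if i = j ∧ (k : ℕ) = 0 then M + C + 1 else 0, ?_⟩
    rw [ostrogradsky_key N α hα j hj χ L (M + C + 1)]
    · linarith
end

section
/- Let N ≥ 1 and α ≥ 2. Let Q ∈ (Fin N → Fin α → ℝ) denote configuration variables and P ∈ (Fin N → Fin α → ℝ) their conjugate momenta. Let 𝒬 : (Fin N → Fin α → ℝ) → Fin N → Fin α → ℝ, v : (Fin N → Fin α → ℝ) → (Fin N → ℝ) → (Fin N → ℝ), and L : (Fin N → Fin α → ℝ) → (Fin N → ℝ) → ℝ be arbitrary functions, and write Pᵗᵒᵖ for the family i ↦ P i (α − 1). Define H(Q, P) = Σᵢ Σ_{β ≤ α − 2} (P i β)·(𝒬 Q i β) + Σᵢ (P i (α − 1))·(v Q Pᵗᵒᵖ i) − L Q (v Q Pᵗᵒᵖ). If there exist an index j, an index γ ≤ α − 2 and a configuration Q* with 𝒬 Q* j γ ≠ 0, then H is unbounded below and unbounded above. -/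
open Finset in
/-- The constrained canonical Hamiltonian in the generalized coordinates of the
second formulation of Ostrogradsky's theorem:
`H(Q,P) = Σᵢ Σ_{β ≤ α−2} Pᵢᵝ·𝒬ᵢᵝ(Q) + Σᵢ Pᵢ^{α−1}·vᵢ(Q, Pᵗᵒᵖ) − L(Q, v(Q, Pᵗᵒᵖ))`. -/
noncomputable def constrainedHamiltonian (N α : ℕ) (hα : 2 ≤ α)
    (𝒬 : (Fin N → Fin α → ℝ) → Fin N → Fin α → ℝ)
    (v : (Fin N → Fin α → ℝ) → (Fin N → ℝ) → (Fin N → ℝ))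
    (L : (Fin N → Fin α → ℝ) → (Fin N → ℝ) → ℝ)
    (Q P : Fin N → Fin α → ℝ) : ℝ :=
  (∑ i, ∑ β : Fin α, if (β : ℕ) ≤ α - 2 then P i β * 𝒬 Q i β else 0)
  + (∑ i, P i ⟨α - 1, by omega⟩ * v Q (fun j => P j ⟨α - 1, by omega⟩) i)
  - L Q (fun j => P j ⟨α - 1, by omega⟩)

open Finset in
lemma constrainedHamiltonian_special (N α : ℕ) (hα : 2 ≤ α)
    (𝒬 : (Fin N → Fin α → ℝ) → Fin N → Fin α → ℝ)
    (v : (Fin N → Fin α → ℝ) → (Fin N → ℝ) → (Fin N → ℝ))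
    (L : (Fin N → Fin α → ℝ) → (Fin N → ℝ) → ℝ)
    (j : Fin N) (γ : Fin α) (hγ : (γ : ℕ) ≤ α - 2)
    (Qstar : Fin N → Fin α → ℝ) (c : ℝ) :
    constrainedHamiltonian N α hα 𝒬 v L Qstar
      (fun i β => if i = j ∧ β = γ then c else 0)
      = c * 𝒬 Qstar j γ - L Qstar (fun _ => 0) := by
  have hne : γ ≠ (⟨α - 1, by omega⟩ : Fin α) := by
    intro h
    have := congrArg (Fin.val) h
    simp at this
    omega
  unfold constrainedHamiltonian
  have h1 : (∑ i, ∑ β : Fin α,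
      if (β : ℕ) ≤ α - 2 then
        (if i = j ∧ β = γ then c else 0) * 𝒬 Qstar i β else 0)
      = c * 𝒬 Qstar j γ := by
    rw [Finset.sum_eq_single j]
    · rw [Finset.sum_eq_single γ]
      · simp [hγ]
      · intro b _ hb
        simp [hb]
      · simp
    · intro i _ hi
      apply Finset.sum_eq_zero
      intro b _
      have : ¬(i = j ∧ b = γ) := by tauto
      simp [this]
    · simp
  have h2 : ∀ i : Fin N,
      (if i = j ∧ (⟨α - 1, by omega⟩ : Fin α) = γ then c else 0) = 0 := by
    intro i
    simp [hne.symm]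
  simp only [h2]
  rw [h1]
  simp

/-- Ostrogradsky's instability theorem in the second canonical formulation: if
some velocity function `𝒬 Q* j γ` with `γ ≤ α − 2` is nonzero at some
configuration `Q*`, then the constrained canonical Hamiltonian is unbounded
below and unbounded above. -/
theorem constrained_ostrogradsky_unbounded (N α : ℕ) (hN : 1 ≤ N) (hα : 2 ≤ α)
    (𝒬 : (Fin N → Fin α → ℝ) → Fin N → Fin α → ℝ)
    (v : (Fin N → Fin α → ℝ) → (Fin N → ℝ) → (Fin N → ℝ))
    (L : (Fin N → Fin α → ℝ) → (Fin N → ℝ) → ℝ)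
    (j : Fin N) (γ : Fin α) (hγ : (γ : ℕ) ≤ α - 2)
    (Qstar : Fin N → Fin α → ℝ) (hQ : 𝒬 Qstar j γ ≠ 0) :
    ∀ M : ℝ,
      (∃ Q P : Fin N → Fin α → ℝ, constrainedHamiltonian N α hα 𝒬 v L Q P < M) ∧
      (∃ Q P : Fin N → Fin α → ℝ, constrainedHamiltonian N α hα 𝒬 v L Q P > M) := by
  intro M
  set a := 𝒬 Qstar j γ
  set b := L Qstar (fun _ => 0)
  constructor
  · refine ⟨Qstar, (fun i β => if i = j ∧ β = γ then (M + b - 1) / a else 0), ?_⟩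
    rw [constrainedHamiltonian_special N α hα 𝒬 v L j γ hγ Qstar,
      div_mul_cancel₀ _ hQ]
    simp only [b]
    linarith
  · refine ⟨Qstar, (fun i β => if i = j ∧ β = γ then (M + b + 1) / a else 0), ?_⟩
    rw [constrainedHamiltonian_special N α hα 𝒬 v L j γ hγ Qstar]
    rw [div_mul_cancel₀ _ hQ]
    linarith
end

section
/- Suppose g is twice continuously differentiable and A is continuously differentiable. Define F_{μν} = ∂_μ A_ν − ∂_ν A_μ and E_{μν} = ∇_μ A_ν + ∇_ν A_μ + 4·A_μ A_ν. Then the Ricci tensor of the Weyl connection and the Ricci tensor of the Levi–Civita connection are related, at every point of ℝ⁴ and for all indices μ, ν, by Ric[Γ̄]_{μν} = Ric[Γ]_{μν} + ½·g_{μν}·(∇^λ A_λ − A^λ A_λ) − (3/2)·A_μ A_ν − F_{μν} + ½·E_{μν}. -/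
open Finset

/-- Directional (partial) derivative along the `μ`-th standard basis vector of `ℝ⁴`. -/
noncomputable def pderiv4 (μ : Fin 4) (f : (Fin 4 → ℝ) → ℝ) (x : Fin 4 → ℝ) : ℝ :=
  fderiv ℝ f x (Pi.single μ 1)

/-- Christoffel symbols `Γ^λ_{μν}` of a metric `g` on `ℝ⁴`:
`Γ^λ_{μν} = ½ Σ_σ (g⁻¹)^{λσ} (∂_μ g_{νσ} + ∂_ν g_{μσ} − ∂_σ g_{μν})`. -/
noncomputable def christoffel (g : (Fin 4 → ℝ) → Matrix (Fin 4) (Fin 4) ℝ)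
    (x : Fin 4 → ℝ) (l μ ν : Fin 4) : ℝ :=
  (1 / 2) * ∑ σ, (g x)⁻¹ l σ *
    (pderiv4 μ (fun y => g y ν σ) x + pderiv4 ν (fun y => g y μ σ) x
      - pderiv4 σ (fun y => g y μ ν) x)

/-- Weyl connection coefficients
`Γ̄^λ_{μν} = Γ^λ_{μν} − ½ Σ_σ (g⁻¹)^{λσ} (A_μ g_{νσ} + A_ν g_{μσ} − A_σ g_{μν})`. -/
noncomputable def weylConn (g : (Fin 4 → ℝ) → Matrix (Fin 4) (Fin 4) ℝ)
    (A : (Fin 4 → ℝ) → Fin 4 → ℝ) (x : Fin 4 → ℝ) (l μ ν : Fin 4) : ℝ :=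
  christoffel g x l μ ν - (1 / 2) * ∑ σ, (g x)⁻¹ l σ *
    (A x μ * g x ν σ + A x ν * g x μ σ - A x σ * g x μ ν)

/-- Riemann tensor of connection coefficients `C`:
`Riem[C]^λ_{μσν} = ∂_σ C^λ_{νμ} − ∂_ν C^λ_{σμ}
+ Σ_α (C^λ_{ασ} C^α_{νμ} − C^λ_{αν} C^α_{σμ})`. -/
noncomputable def riemann (C : (Fin 4 → ℝ) → Fin 4 → Fin 4 → Fin 4 → ℝ)
    (x : Fin 4 → ℝ) (l μ σ ν : Fin 4) : ℝ :=
  pderiv4 σ (fun y => C y l ν μ) x - pderiv4 ν (fun y => C y l σ μ) x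
    + ∑ a, (C x l a σ * C x a ν μ - C x l a ν * C x a σ μ)

/-- Ricci tensor `Ric[C]_{μν} = Σ_λ Riem[C]^λ_{μλν}`. -/
noncomputable def ricci (C : (Fin 4 → ℝ) → Fin 4 → Fin 4 → Fin 4 → ℝ)
    (x : Fin 4 → ℝ) (μ ν : Fin 4) : ℝ :=
  ∑ l, riemann C x l μ l ν

/-- Scalar curvature `Scal[C] = Σ_{μ,ν} (g⁻¹)^{μν} Ric[C]_{μν}`. -/
noncomputable def scalarCurv (g : (Fin 4 → ℝ) → Matrix (Fin 4) (Fin 4) ℝ)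
    (C : (Fin 4 → ℝ) → Fin 4 → Fin 4 → Fin 4 → ℝ) (x : Fin 4 → ℝ) : ℝ :=
  ∑ μ, ∑ ν, (g x)⁻¹ μ ν * ricci C x μ ν

/-- Levi–Civita covariant derivative of the Weyl field:
`∇_μ A_ν = ∂_μ A_ν − Σ_σ Γ^σ_{μν} A_σ`. -/
noncomputable def covDerivA (g : (Fin 4 → ℝ) → Matrix (Fin 4) (Fin 4) ℝ)
    (A : (Fin 4 → ℝ) → Fin 4 → ℝ) (x : Fin 4 → ℝ) (μ ν : Fin 4) : ℝ :=
  pderiv4 μ (fun y => A y ν) x - ∑ σ, christoffel g x σ μ ν * A x σ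

/-- The divergence `∇^λ A_λ = Σ_{λ,μ} (g⁻¹)^{μλ} ∇_μ A_λ`. -/
noncomputable def divA (g : (Fin 4 → ℝ) → Matrix (Fin 4) (Fin 4) ℝ)
    (A : (Fin 4 → ℝ) → Fin 4 → ℝ) (x : Fin 4 → ℝ) : ℝ :=
  ∑ l, ∑ μ, (g x)⁻¹ μ l * covDerivA g A x μ l

/-- The squared norm `A^λ A_λ = Σ_{λ,μ} (g⁻¹)^{λμ} A_λ A_μ`. -/
noncomputable def normSqA (g : (Fin 4 → ℝ) → Matrix (Fin 4) (Fin 4) ℝ)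
    (A : (Fin 4 → ℝ) → Fin 4 → ℝ) (x : Fin 4 → ℝ) : ℝ :=
  ∑ l, ∑ μ, (g x)⁻¹ l μ * A x l * A x μ

theorem pderiv4_congr {f h : (Fin 4 → ℝ) → ℝ} (hfh : ∀ y, f y = h y) (μ : Fin 4) (x : Fin 4 → ℝ) :
    pderiv4 μ f x = pderiv4 μ h x := by
  have : f = h := funext hfh
  rw [pderiv4, pderiv4, this]

theorem pderiv4_add {f h : (Fin 4 → ℝ) → ℝ} {x : Fin 4 → ℝ} (hf : DifferentiableAt ℝ f x)
    (hh : DifferentiableAt ℝ h x) (μ : Fin 4) :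
    pderiv4 μ (fun y => f y + h y) x = pderiv4 μ f x + pderiv4 μ h x := by
  simp [pderiv4, fderiv_fun_add hf hh]

theorem pderiv4_sub {f h : (Fin 4 → ℝ) → ℝ} {x : Fin 4 → ℝ} (hf : DifferentiableAt ℝ f x)
    (hh : DifferentiableAt ℝ h x) (μ : Fin 4) :
    pderiv4 μ (fun y => f y - h y) x = pderiv4 μ f x - pderiv4 μ h x := by
  simp [pderiv4, fderiv_fun_sub hf hh]

theorem pderiv4_const_mul {f : (Fin 4 → ℝ) → ℝ} {x : Fin 4 → ℝ} (c : ℝ)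
    (hf : DifferentiableAt ℝ f x) (μ : Fin 4) :
    pderiv4 μ (fun y => c * f y) x = c * pderiv4 μ f x := by
  simp [pderiv4, fderiv_const_mul hf c]

theorem pderiv4_mul {f h : (Fin 4 → ℝ) → ℝ} {x : Fin 4 → ℝ} (hf : DifferentiableAt ℝ f x)
    (hh : DifferentiableAt ℝ h x) (μ : Fin 4) :
    pderiv4 μ (fun y => f y * h y) x = pderiv4 μ f x * h x + f x * pderiv4 μ h x := by
  simp [pderiv4, fderiv_fun_mul hf hh]; ring

theorem pderiv4_sum {ι : Type*} {s : Finset ι} {f : ι → (Fin 4 → ℝ) → ℝ} {x : Fin 4 → ℝ}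
    (hf : ∀ i ∈ s, DifferentiableAt ℝ (f i) x) (μ : Fin 4) :
    pderiv4 μ (fun y => ∑ i ∈ s, f i y) x = ∑ i ∈ s, pderiv4 μ (f i) x := by
  simp [pderiv4, fderiv_fun_sum hf]

theorem diff_prod {ι : Type*} (s : Finset ι) (f : ι → (Fin 4 → ℝ) → ℝ)
    (h : ∀ i ∈ s, Differentiable ℝ (f i)) :
    Differentiable ℝ (fun x => ∏ i ∈ s, f i x) := by
  classical
  induction s using Finset.induction with
  | empty => simpa using differentiable_const 1
  | insert a s hni ih =>
    simp only [Finset.prod_insert hni]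
    exact (h a (Finset.mem_insert_self a s)).mul
      (ih fun i hi => h i (Finset.mem_insert_of_mem hi))

theorem diff_det {M : (Fin 4 → ℝ) → Matrix (Fin 4) (Fin 4) ℝ}
    (h : ∀ i j, Differentiable ℝ fun x => M x i j) :
    Differentiable ℝ fun x => (M x).det := by
  simp only [Matrix.det_apply']
  exact Differentiable.fun_sum fun σ _ => Differentiable.const_mul
    (diff_prod _ _ fun i _ => h (σ i) i) _

theorem diff_inv_entry {M : (Fin 4 → ℝ) → Matrix (Fin 4) (Fin 4) ℝ}
    (h : ∀ i j, Differentiable ℝ fun x => M x i j)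
    (hu : ∀ x, IsUnit (M x).det) (i j : Fin 4) :
    Differentiable ℝ fun x => (M x)⁻¹ i j := by
  have : (fun x => (M x)⁻¹ i j) = fun x => ((M x).det)⁻¹ * (M x).adjugate i j := by
    funext x
    rw [Matrix.inv_def, Matrix.smul_apply, Ring.inverse_eq_inv', smul_eq_mul]
  rw [this]
  apply Differentiable.mul
  · exact Differentiable.inv (diff_det h) fun x => (hu x).ne_zero
  · simp only [Matrix.adjugate_apply]
    apply diff_det
    intro a b
    simp only [Matrix.updateRow_apply]
    by_cases hab : a = j <;> simp [hab, h]


section Core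
variable {a B dB : Fin 4 → ℝ} {da : Fin 4 → Fin 4 → ℝ}
  {G : Matrix (Fin 4) (Fin 4) ℝ} {dG : Fin 4 → Fin 4 → Fin 4 → ℝ}
  {Γ T : Fin 4 → Fin 4 → Fin 4 → ℝ} {nsq dv : ℝ}
variable (hT : ∀ l m n, T l m n = (1/2)*(a m * (if l = n then 1 else 0)
    + a n * (if l = m then 1 else 0) - B l * G m n))
variable (hGsym : ∀ i j, G i j = G j i)
variable (hΓsym : ∀ l i j, Γ l i j = Γ l j i)
variable (hc2 : ∀ c, ∑ l, B l * G l c = a c)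
variable (hnsq : nsq = ∑ l, a l * B l)
variable (hc3 : ∀ l m n, dG l m n = ∑ σ, Γ σ l m * G σ n + ∑ σ, Γ σ l n * G m σ)
variable (hdv : dv = ∑ l, dB l + ∑ c, (∑ l, Γ l c l) * B c)

include hT hGsym hc2 in
theorem sT2 (c : Fin 4) : ∑ l, T l c l = 2 * a c := by
  simp only [hT]
  rw [Fin.sum_univ_four]
  have h := hc2 c
  rw [Fin.sum_univ_four] at h
  have h0 := hGsym 0 c; have h1 := hGsym 1 c; have h2 := hGsym 2 c; have h3 := hGsym 3 c
  fin_cases c <;> simp_all <;> linarith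

include hT hGsym hc2 in
theorem sT1 (c : Fin 4) : ∑ l, T l l c = 2 * a c := by
  simp only [hT]
  rw [Fin.sum_univ_four]
  have h := hc2 c
  rw [Fin.sum_univ_four] at h
  have h0 := hGsym 0 c; have h1 := hGsym 1 c; have h2 := hGsym 2 c; have h3 := hGsym 3 c
  fin_cases c <;> simp_all <;> linarith

include hT in
theorem expandT (W : Fin 4 → ℝ) (m n : Fin 4) :
    ∑ c, W c * T c m n = (1/2) * (a m * W n + a n * W m - (∑ c, W c * B c) * G m n) := by
  simp only [hT]
  rw [Fin.sum_univ_four, Fin.sum_univ_four]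
  fin_cases m <;> fin_cases n <;> simp <;> ring

include hT in
theorem expandT' (W : Fin 4 → ℝ) (m n : Fin 4) :
    ∑ c, T c m n * W c = (1/2) * (a m * W n + a n * W m - (∑ c, B c * W c) * G m n) := by
  simp only [hT]
  rw [Fin.sum_univ_four, Fin.sum_univ_four]
  fin_cases m <;> fin_cases n <;> simp <;> ring

theorem sum_half_split (x y z : Fin 4 → ℝ) :
    ∑ l, (1/2 : ℝ) * (x l + y l - z l)
      = (1/2) * (∑ l, x l) + (1/2) * (∑ l, y l) - (1/2) * (∑ l, z l) := by
  simp only [Finset.mul_sum, ← Finset.sum_add_distrib, ← Finset.sum_sub_distrib]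
  exact Finset.sum_congr rfl fun l _ => by ring

-- X1
include hT in
theorem X1 (μ ν : Fin 4) : ∑ l, ∑ c, Γ l c l * T c ν μ
    = (1/2) * (a ν * (∑ l, Γ l μ l) + a μ * (∑ l, Γ l ν l)
        - (∑ c, (∑ l, Γ l c l) * B c) * G ν μ) := by
  rw [Finset.sum_comm]
  have : ∀ c, ∑ l, Γ l c l * T c ν μ = (∑ l, Γ l c l) * T c ν μ := by
    intro c; rw [Finset.sum_mul]
  simp only [this]
  exact expandT hT _ ν μ

-- X2
include hT hGsym hc2 in
theorem X2 (μ ν : Fin 4) : ∑ l, ∑ c, T l c l * Γ c ν μ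
    = 2 * ∑ c, a c * Γ c ν μ := by
  rw [Finset.sum_comm]
  have : ∀ c, ∑ l, T l c l * Γ c ν μ = (∑ l, T l c l) * Γ c ν μ := by
    intro c; rw [Finset.sum_mul]
  simp only [this, sT2 hT hGsym hc2, Finset.mul_sum]
  exact Finset.sum_congr rfl fun c _ => by ring

-- X3
include hT hGsym hc2 hnsq in
theorem X3 (μ ν : Fin 4) : ∑ l, ∑ c, T l c l * T c ν μ
    = 2 * (a μ * a ν) - nsq * G ν μ := by
  rw [Finset.sum_comm]
  have : ∀ c, ∑ l, T l c l * T c ν μ = (∑ l, T l c l) * T c ν μ := by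
    intro c; rw [Finset.sum_mul]
  simp only [this, sT2 hT hGsym hc2]
  have h2 : ∑ c, (2 * a c) * T c ν μ
      = (1/2) * (a ν * (2 * a μ) + a μ * (2 * a ν) - (∑ c, (2 * a c) * B c) * G ν μ) :=
    expandT hT (fun c => 2 * a c) ν μ
  rw [h2, hnsq]
  have h3 : ∑ c, 2 * a c * B c = 2 * ∑ c, a c * B c := by
    rw [Finset.mul_sum]; exact Finset.sum_congr rfl fun c _ => by ring
  linear_combination (-(G ν μ)/2) * h3

-- X4
include hT in
theorem X4 (μ ν : Fin 4) : ∑ l, ∑ c, Γ l c ν * T c l μ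
    = (1/2) * (∑ l, a l * Γ l μ ν) + (1/2) * a μ * (∑ l, Γ l l ν)
      - (1/2) * ∑ l, (∑ c, Γ l c ν * B c) * G l μ := by
  have : ∀ l, ∑ c, Γ l c ν * T c l μ
      = (1/2) * (a l * Γ l μ ν + a μ * Γ l l ν - (∑ c, Γ l c ν * B c) * G l μ) := by
    intro l; exact expandT hT (fun c => Γ l c ν) l μ
  simp only [this]
  rw [sum_half_split]
  have h4 : ∑ l, a μ * Γ l l ν = a μ * ∑ l, Γ l l ν := by rw [Finset.mul_sum]
  linear_combination ((1:ℝ)/2) * h4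

-- X5
include hT in
theorem X5 (μ ν : Fin 4) : ∑ l, ∑ c, T l c ν * Γ c l μ
    = (1/2) * (∑ c, a c * Γ c ν μ) + (1/2) * a ν * (∑ c, Γ c c μ)
      - (1/2) * ∑ c, (∑ l, B l * Γ c l μ) * G c ν := by
  rw [Finset.sum_comm]
  have : ∀ c, ∑ l, T l c ν * Γ c l μ
      = (1/2) * (a c * Γ c ν μ + a ν * Γ c c μ - (∑ l, B l * Γ c l μ) * G c ν) := by
    intro c; exact expandT' hT (fun l => Γ c l μ) c ν
  simp only [this]
  rw [sum_half_split]
  have h4 : ∑ c, a ν * Γ c c μ = a ν * ∑ c, Γ c c μ := by rw [Finset.mul_sum]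
  linear_combination ((1:ℝ)/2) * h4
end Core

section Core3
variable {a B dB : Fin 4 → ℝ} {da : Fin 4 → Fin 4 → ℝ}
  {G : Matrix (Fin 4) (Fin 4) ℝ} {dG : Fin 4 → Fin 4 → Fin 4 → ℝ}
  {Γ T : Fin 4 → Fin 4 → Fin 4 → ℝ} {nsq dv : ℝ}
variable (hT : ∀ l m n, T l m n = (1/2)*(a m * (if l = n then 1 else 0)
    + a n * (if l = m then 1 else 0) - B l * G m n))
variable (hGsym : ∀ i j, G i j = G j i)
variable (hΓsym : ∀ l i j, Γ l i j = Γ l j i)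
variable (hc2 : ∀ c, ∑ l, B l * G l c = a c)
variable (hnsq : nsq = ∑ l, a l * B l)
variable (hc3 : ∀ l m n, dG l m n = ∑ σ, Γ σ l m * G σ n + ∑ σ, Γ σ l n * G m σ)
variable (hdv : dv = ∑ l, dB l + ∑ c, (∑ l, Γ l c l) * B c)

include hT hc2 in
theorem h5 (c μ : Fin 4) : ∑ l, B l * T c l μ
    = (1/2) * (if c = μ then ∑ l, B l * a l else 0) := by
  have e : ∀ l, B l * T c l μ = (1/2)*(B l * a l * (if c = μ then 1 else 0)
      + a μ * B l * (if c = l then 1 else 0) - B c * (B l * G l μ)) := by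
    intro l; rw [hT]; ring
  simp only [e]
  rw [sum_half_split]
  have e1 : ∑ l, B l * a l * (if c = μ then 1 else 0)
      = (∑ l, B l * a l) * (if c = μ then 1 else 0) := by rw [Finset.sum_mul]
  have e2 : ∑ l, a μ * B l * (if c = l then 1 else 0) = a μ * B c := by
    simp [mul_ite, Finset.sum_ite_eq]
  have e3 : ∑ l, B c * (B l * G l μ) = B c * a μ := by
    rw [← Finset.mul_sum, hc2 μ]
  rw [e1, e2, e3]
  by_cases hcm : c = μ <;> simp [hcm] <;> ring

include hT hGsym hc2 hnsq in
theorem X6 (μ ν : Fin 4) : ∑ l, ∑ c, T l c ν * T c l μ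
    = (3/2) * (a μ * a ν) - (1/2) * nsq * G ν μ := by
  rw [Finset.sum_comm]
  have e : ∀ c, ∑ l, T l c ν * T c l μ
      = (1/2) * (a c * T c ν μ + a ν * T c c μ - (∑ l, B l * T c l μ) * G c ν) := by
    intro c; exact expandT' hT (fun l => T c l μ) c ν
  simp only [e]
  rw [sum_half_split]
  have eA : ∑ c, a c * T c ν μ
      = (1/2) * (a ν * a μ + a μ * a ν - (∑ c, a c * B c) * G ν μ) := expandT hT a ν μ
  have eB : ∑ c, a ν * T c c μ = a ν * (2 * a μ) := by
    rw [← Finset.mul_sum, sT1 hT hGsym hc2]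
  have eC : ∑ c, (∑ l, B l * T c l μ) * G c ν
      = (1/2) * (∑ l, B l * a l) * G μ ν := by
    simp only [h5 hT hc2]
    simp [ite_mul, Finset.sum_ite_eq]
  rw [eA, eB, eC]
  have h6 : ∑ c, a c * B c = ∑ l, a l * B l := rfl
  have h7 : ∑ l, B l * a l = ∑ l, a l * B l :=
    Finset.sum_congr rfl fun l _ => by ring
  rw [h6, h7, ← hnsq, hGsym μ ν]
  ring

include hGsym hc3 in
theorem Y1 (μ ν : Fin 4) : ∑ l, B l * dG l ν μ
    = ∑ l, (∑ c, Γ l c ν * B c) * G l μ + ∑ c, (∑ l, B l * Γ c l μ) * G c ν := by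
  simp only [hc3]
  have e : ∀ l, B l * ((∑ σ, Γ σ l ν * G σ μ) + ∑ σ, Γ σ l μ * G ν σ)
      = (∑ σ, B l * (Γ σ l ν * G σ μ)) + ∑ σ, B l * (Γ σ l μ * G ν σ) := by
    intro l; rw [← Finset.mul_sum, ← Finset.mul_sum, mul_add]
  simp only [e]
  rw [Finset.sum_add_distrib]
  congr 1
  · rw [Finset.sum_comm]
    exact Finset.sum_congr rfl fun l _ => by
      rw [Finset.sum_mul]; exact Finset.sum_congr rfl fun c _ => by ring
  · rw [Finset.sum_comm]
    exact Finset.sum_congr rfl fun c _ => by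
      rw [Finset.sum_mul]; exact Finset.sum_congr rfl fun l _ => by
        rw [hGsym ν c]; ring
end Core3

section Core4
variable {a B dB : Fin 4 → ℝ} {da : Fin 4 → Fin 4 → ℝ}
  {G : Matrix (Fin 4) (Fin 4) ℝ} {dG : Fin 4 → Fin 4 → Fin 4 → ℝ}
  {Γ T : Fin 4 → Fin 4 → Fin 4 → ℝ} {nsq dv : ℝ}
variable (hT : ∀ l m n, T l m n = (1/2)*(a m * (if l = n then 1 else 0)
    + a n * (if l = m then 1 else 0) - B l * G m n))
variable (hGsym : ∀ i j, G i j = G j i)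
variable (hΓsym : ∀ l i j, Γ l i j = Γ l j i)
variable (hc2 : ∀ c, ∑ l, B l * G l c = a c)
variable (hnsq : nsq = ∑ l, a l * B l)
variable (hc3 : ∀ l m n, dG l m n = ∑ σ, Γ σ l m * G σ n + ∑ σ, Γ σ l n * G m σ)
variable (hdv : dv = ∑ l, dB l + ∑ c, (∑ l, Γ l c l) * B c)

include hT hGsym hΓsym hc2 hnsq hc3 hdv in
theorem core (μ ν : Fin 4) :
    2 * da ν μ
      - (1/2) * (da μ ν + da ν μ - ∑ l, (dB l * G ν μ + B l * dG l ν μ))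
      + ∑ l, ∑ c, (-(Γ l c l * T c ν μ) - T l c l * Γ c ν μ + T l c l * T c ν μ
          + Γ l c ν * T c l μ + T l c ν * Γ c l μ - T l c ν * T c l μ)
    = (1/2) * G μ ν * (dv - nsq) - (3/2) * (a μ * a ν)
      - (da μ ν - da ν μ)
      + (1/2) * ((da μ ν - ∑ σ, Γ σ μ ν * a σ) + (da ν μ - ∑ σ, Γ σ ν μ * a σ)
          + 4 * (a μ * a ν)) := by
  have split : ∑ l, ∑ c, (-(Γ l c l * T c ν μ) - T l c l * Γ c ν μ + T l c l * T c ν μ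
          + Γ l c ν * T c l μ + T l c ν * Γ c l μ - T l c ν * T c l μ)
      = -(∑ l, ∑ c, Γ l c l * T c ν μ) - (∑ l, ∑ c, T l c l * Γ c ν μ)
        + (∑ l, ∑ c, T l c l * T c ν μ) + (∑ l, ∑ c, Γ l c ν * T c l μ)
        + (∑ l, ∑ c, T l c ν * Γ c l μ) - (∑ l, ∑ c, T l c ν * T c l μ) := by
    simp only [Finset.sum_add_distrib, Finset.sum_sub_distrib, Finset.sum_neg_distrib]
  rw [split, X1 hT, X2 hT hGsym hc2, X3 hT hGsym hc2 hnsq, X4 hT, X5 hT,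
    X6 hT hGsym hc2 hnsq]
  have hSd : ∑ l, (dB l * G ν μ + B l * dG l ν μ)
      = (∑ l, dB l) * G ν μ
        + (∑ l, (∑ c, Γ l c ν * B c) * G l μ + ∑ c, (∑ l, B l * Γ c l μ) * G c ν) := by
    rw [Finset.sum_add_distrib, Finset.sum_mul, Y1 hGsym hc3]
  have hS1 : (∑ l, Γ l l ν) = ∑ l, Γ l ν l := Finset.sum_congr rfl fun l _ => hΓsym l l ν
  have hS2 : (∑ c, Γ c c μ) = ∑ l, Γ l μ l := Finset.sum_congr rfl fun l _ => hΓsym l l μ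
  have hV1 : (∑ l, a l * Γ l μ ν) = ∑ c, a c * Γ c ν μ :=
    Finset.sum_congr rfl fun l _ => by rw [hΓsym l μ ν]
  have hR1 : (∑ σ, Γ σ μ ν * a σ) = ∑ c, a c * Γ c ν μ :=
    Finset.sum_congr rfl fun l _ => by rw [hΓsym l μ ν]; ring
  have hR2 : (∑ σ, Γ σ ν μ * a σ) = ∑ c, a c * Γ c ν μ :=
    Finset.sum_congr rfl fun l _ => by ring
  have hG : G μ ν = G ν μ := hGsym μ ν
  rw [hSd, hS1, hS2, hV1, hR1, hR2, hG, hdv]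
  ring
end Core4


theorem pderiv4_const (c : ℝ) (μ : Fin 4) (x : Fin 4 → ℝ) :
    pderiv4 μ (fun _ => c) x = 0 := by simp [pderiv4]

section Geo
variable {g : (Fin 4 → ℝ) → Matrix (Fin 4) (Fin 4) ℝ} {A : (Fin 4 → ℝ) → Fin 4 → ℝ}
variable (hg_symm : ∀ x, (g x).IsSymm) (hg_unit : ∀ x, IsUnit (g x).det)
variable (hg_smooth : ∀ μ ν, ContDiff ℝ 2 fun x => g x μ ν)
variable (hA_smooth : ∀ μ, ContDiff ℝ 1 fun x => A x μ)

noncomputable def Bf (g : (Fin 4 → ℝ) → Matrix (Fin 4) (Fin 4) ℝ)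
    (A : (Fin 4 → ℝ) → Fin 4 → ℝ) (y : Fin 4 → ℝ) (l : Fin 4) : ℝ :=
  ∑ σ, (g y)⁻¹ l σ * A y σ

noncomputable def Tf (g : (Fin 4 → ℝ) → Matrix (Fin 4) (Fin 4) ℝ)
    (A : (Fin 4 → ℝ) → Fin 4 → ℝ) (y : Fin 4 → ℝ) (l m n : Fin 4) : ℝ :=
  (1/2) * (A y m * (if l = n then 1 else 0) + A y n * (if l = m then 1 else 0)
    - Bf g A y l * g y m n)

include hg_symm in
theorem gsym (y : Fin 4 → ℝ) (i j : Fin 4) : g y i j = g y j i :=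
  by have h := congrFun (congrFun (hg_symm y) j) i
     rwa [Matrix.transpose_apply] at h

include hg_smooth in
theorem gd (μ ν : Fin 4) : Differentiable ℝ fun y => g y μ ν :=
  (hg_smooth μ ν).differentiable (by norm_num)

include hA_smooth in
theorem Ad (μ : Fin 4) : Differentiable ℝ fun y => A y μ :=
  (hA_smooth μ).differentiable (by norm_num)
end Geo

section Geo2
variable {g : (Fin 4 → ℝ) → Matrix (Fin 4) (Fin 4) ℝ} {A : (Fin 4 → ℝ) → Fin 4 → ℝ}
variable (hg_symm : ∀ x, (g x).IsSymm) (hg_unit : ∀ x, IsUnit (g x).det)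
variable (hg_smooth : ∀ μ ν, ContDiff ℝ 2 fun x => g x μ ν)
variable (hA_smooth : ∀ μ, ContDiff ℝ 1 fun x => A x μ)

include hg_smooth in
theorem dgd (σ μ ν : Fin 4) :
    Differentiable ℝ fun y => pderiv4 σ (fun z => g z μ ν) y := by
  have h1 : ContDiff ℝ 1 (fderiv ℝ (fun z => g z μ ν)) :=
    (hg_smooth μ ν).fderiv_right (by norm_num)
  exact (h1.clm_apply contDiff_const).differentiable (by norm_num)

include hg_unit in
theorem L_Pg (y : Fin 4 → ℝ) (l ν : Fin 4) :
    ∑ σ, (g y)⁻¹ l σ * g y σ ν = if l = ν then 1 else 0 := by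
  have h := Matrix.nonsing_inv_mul (g y) (hg_unit y)
  have := congrFun (congrFun h l) ν
  simpa [Matrix.mul_apply, Matrix.one_apply] using this

include hg_unit in
theorem L_gP (y : Fin 4 → ℝ) (l ν : Fin 4) :
    ∑ σ, g y l σ * (g y)⁻¹ σ ν = if l = ν then 1 else 0 := by
  have h := Matrix.mul_nonsing_inv (g y) (hg_unit y)
  have := congrFun (congrFun h l) ν
  simpa [Matrix.mul_apply, Matrix.one_apply] using this

include hg_symm hg_unit in
theorem Psym (y : Fin 4 → ℝ) (i j : Fin 4) : (g y)⁻¹ i j = (g y)⁻¹ j i := by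
  have h : Matrix.transpose (g y)⁻¹ = (g y)⁻¹ := by
    rw [Matrix.transpose_nonsing_inv, (hg_symm y)]
  have h2 := congrFun (congrFun h i) j
  rw [Matrix.transpose_apply] at h2
  exact h2.symm

include hg_smooth hg_unit in
theorem Pd (i j : Fin 4) : Differentiable ℝ fun y => (g y)⁻¹ i j :=
  diff_inv_entry (fun i j => gd hg_smooth i j) hg_unit i j

include hg_smooth hg_unit hA_smooth in
theorem Bfd (l : Fin 4) : Differentiable ℝ fun y => Bf g A y l := by
  unfold Bf
  exact Differentiable.fun_sum fun σ _ => (Pd hg_unit hg_smooth l σ).mul (Ad hA_smooth σ)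

include hg_smooth hg_unit in
theorem christoffeld (l m n : Fin 4) :
    Differentiable ℝ fun y => christoffel g y l m n := by
  unfold christoffel
  exact Differentiable.const_mul (Differentiable.fun_sum fun σ _ =>
    (Pd hg_unit hg_smooth l σ).mul (((dgd hg_smooth m n σ).add (dgd hg_smooth n m σ)).sub
      (dgd hg_smooth σ m n))) _

end Geo2

section Geo3
variable {g : (Fin 4 → ℝ) → Matrix (Fin 4) (Fin 4) ℝ} {A : (Fin 4 → ℝ) → Fin 4 → ℝ}
variable (hg_symm : ∀ x, (g x).IsSymm) (hg_unit : ∀ x, IsUnit (g x).det)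
variable (hg_smooth : ∀ μ ν, ContDiff ℝ 2 fun x => g x μ ν)
variable (hA_smooth : ∀ μ, ContDiff ℝ 1 fun x => A x μ)

include hg_symm hg_unit hg_smooth hA_smooth in
theorem Tfd (l m n : Fin 4) : Differentiable ℝ fun y => Tf g A y l m n := by
  unfold Tf
  exact Differentiable.const_mul
    ((((Ad hA_smooth m).mul (differentiable_const _)).add
      ((Ad hA_smooth n).mul (differentiable_const _))).sub
      ((Bfd hg_unit hg_smooth hA_smooth l).mul (gd hg_smooth m n))) _

-- symmetry of dG in last two indices
include hg_symm in
theorem dGsym (x : Fin 4 → ℝ) (lam m n : Fin 4) :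
    pderiv4 lam (fun y => g y m n) x = pderiv4 lam (fun y => g y n m) x :=
  pderiv4_congr (fun y => gsym hg_symm y m n) lam x

-- symmetry of christoffel in last two indices
include hg_symm in
theorem Γsym (x : Fin 4 → ℝ) (l m n : Fin 4) :
    christoffel g x l m n = christoffel g x l n m := by
  unfold christoffel
  congr 1
  apply Finset.sum_congr rfl
  intro σ _
  rw [dGsym hg_symm x σ m n]
  ring

-- contraction: ∑_σ (∑_ρ P σ ρ X ρ) G σ n = X n
include hg_symm hg_unit in
theorem contr (x : Fin 4 → ℝ) (X : Fin 4 → ℝ) (n : Fin 4) :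
    ∑ σ, (∑ ρ, (g x)⁻¹ σ ρ * X ρ) * g x σ n = X n := by
  have e : ∀ σ, (∑ ρ, (g x)⁻¹ σ ρ * X ρ) * g x σ n
      = ∑ ρ, X ρ * ((g x)⁻¹ ρ σ * g x σ n) := by
    intro σ
    rw [Finset.sum_mul]
    exact Finset.sum_congr rfl fun ρ _ => by rw [Psym hg_symm hg_unit x σ ρ]; ring
  simp only [e]
  rw [Finset.sum_comm]
  have e2 : ∀ ρ, ∑ σ, X ρ * ((g x)⁻¹ ρ σ * g x σ n) = X ρ * (if ρ = n then 1 else 0) := by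
    intro ρ
    rw [← Finset.mul_sum, L_Pg hg_unit x ρ n]
  simp only [e2]
  simp [Finset.sum_ite_eq]

-- hc2 at x : ∑_l B l * G l c = a c
include hg_symm hg_unit in
theorem hc2x (x : Fin 4 → ℝ) (c : Fin 4) : ∑ l, Bf g A x l * g x l c = A x c :=
  contr hg_symm hg_unit x (fun σ => A x σ) c

-- weylConn = christoffel - Tf
theorem weyl_eq (hg_symm : ∀ x, (g x).IsSymm) (hg_unit : ∀ x, IsUnit (g x).det)
    (y : Fin 4 → ℝ) (l m n : Fin 4) :
    weylConn g A y l m n = christoffel g y l m n - Tf g A y l m n := by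
  unfold weylConn Tf Bf
  have e : ∑ σ, (g y)⁻¹ l σ * (A y m * g y n σ + A y n * g y m σ - A y σ * g y m n)
      = A y m * (∑ σ, (g y)⁻¹ l σ * g y σ n) + A y n * (∑ σ, (g y)⁻¹ l σ * g y σ m)
        - (∑ σ, (g y)⁻¹ l σ * A y σ) * g y m n := by
    rw [Finset.mul_sum, Finset.mul_sum, Finset.sum_mul, ← Finset.sum_add_distrib,
      ← Finset.sum_sub_distrib]
    apply Finset.sum_congr rfl
    intro σ _
    rw [gsym hg_symm y σ n, gsym hg_symm y σ m]
    ring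
  rw [e, L_Pg hg_unit y l n, L_Pg hg_unit y l m]
end Geo3

section Geo4
variable {g : (Fin 4 → ℝ) → Matrix (Fin 4) (Fin 4) ℝ} {A : (Fin 4 → ℝ) → Fin 4 → ℝ}
variable (hg_symm : ∀ x, (g x).IsSymm) (hg_unit : ∀ x, IsUnit (g x).det)
variable (hg_smooth : ∀ μ ν, ContDiff ℝ 2 fun x => g x μ ν)
variable (hA_smooth : ∀ μ, ContDiff ℝ 1 fun x => A x μ)

theorem collapse (u : Fin 4 → ℝ) (σ : Fin 4) :
    ∑ c, u c * (if c = σ then 1 else 0) = u σ := by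
  simp [mul_ite, Finset.sum_ite_eq']

-- metric compatibility at x
include hg_symm hg_unit in
theorem hc3x (x : Fin 4 → ℝ) (l m n : Fin 4) :
    pderiv4 l (fun y => g y m n) x
      = ∑ σ, christoffel g x σ l m * g x σ n + ∑ σ, christoffel g x σ l n * g x m σ := by
  have h1 : ∑ σ, christoffel g x σ l m * g x σ n
      = (1/2) * (pderiv4 l (fun y => g y m n) x + pderiv4 m (fun y => g y l n) x
          - pderiv4 n (fun y => g y l m) x) := by
    have e : ∀ σ, christoffel g x σ l m * g x σ n
        = (1/2) * ((∑ ρ, (g x)⁻¹ σ ρ * (pderiv4 l (fun y => g y m ρ) x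
            + pderiv4 m (fun y => g y l ρ) x - pderiv4 ρ (fun y => g y l m) x)) * g x σ n) := by
      intro σ; unfold christoffel; ring
    simp only [e]
    rw [← Finset.mul_sum, contr hg_symm hg_unit x _ n]
  have h2 : ∑ σ, christoffel g x σ l n * g x m σ
      = (1/2) * (pderiv4 l (fun y => g y n m) x + pderiv4 n (fun y => g y l m) x
          - pderiv4 m (fun y => g y l n) x) := by
    have e : ∀ σ, christoffel g x σ l n * g x m σ
        = (1/2) * ((∑ ρ, (g x)⁻¹ σ ρ * (pderiv4 l (fun y => g y n ρ) x
            + pderiv4 n (fun y => g y l ρ) x - pderiv4 ρ (fun y => g y l n) x)) * g x σ m) := by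
      intro σ; unfold christoffel; rw [gsym hg_symm x m σ]; ring
    simp only [e]
    rw [← Finset.mul_sum, contr hg_symm hg_unit x _ m]
  rw [h1, h2, dGsym hg_symm x l n m]
  ring

-- derivative of inverse metric
include hg_symm hg_unit hg_smooth in
theorem dPf (x : Fin 4 → ℝ) (lam i j : Fin 4) :
    pderiv4 lam (fun y => (g y)⁻¹ i j) x
      = -∑ k, ∑ m, (g x)⁻¹ i k * pderiv4 lam (fun y => g y k m) x * (g x)⁻¹ m j := by
  have hsum : ∀ c : Fin 4, pderiv4 lam (fun y => ∑ σ, (g y)⁻¹ i σ * g y σ c) x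
      = ∑ σ, (pderiv4 lam (fun y => (g y)⁻¹ i σ) x * g x σ c
          + (g x)⁻¹ i σ * pderiv4 lam (fun y => g y σ c) x) := by
    intro c
    rw [pderiv4_sum (fun σ _ => ((Pd hg_unit hg_smooth i σ).fun_mul (gd hg_smooth σ c)).differentiableAt) lam]
    exact Finset.sum_congr rfl fun σ _ =>
      pderiv4_mul (Pd hg_unit hg_smooth i σ).differentiableAt (gd hg_smooth σ c).differentiableAt lam
  have hz : ∀ c : Fin 4, ∑ σ, (pderiv4 lam (fun y => (g y)⁻¹ i σ) x * g x σ c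
      + (g x)⁻¹ i σ * pderiv4 lam (fun y => g y σ c) x) = 0 := by
    intro c
    rw [← hsum c, pderiv4_congr (fun y => L_Pg hg_unit y i c) lam x, pderiv4_const]
  have hneg : ∀ c : Fin 4, ∑ σ, pderiv4 lam (fun y => (g y)⁻¹ i σ) x * g x σ c
      = -∑ σ, (g x)⁻¹ i σ * pderiv4 lam (fun y => g y σ c) x := by
    intro c
    have h := hz c
    rw [Finset.sum_add_distrib] at h
    linarith
  have key : pderiv4 lam (fun y => (g y)⁻¹ i j) x
      = ∑ c, (∑ σ, pderiv4 lam (fun y => (g y)⁻¹ i σ) x * g x σ c) * (g x)⁻¹ c j := by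
    have e : ∀ c, (∑ σ, pderiv4 lam (fun y => (g y)⁻¹ i σ) x * g x σ c) * (g x)⁻¹ c j
        = ∑ σ, pderiv4 lam (fun y => (g y)⁻¹ i σ) x * (g x σ c * (g x)⁻¹ c j) := by
      intro c; rw [Finset.sum_mul]; exact Finset.sum_congr rfl fun σ _ => by ring
    simp only [e]
    rw [Finset.sum_comm]
    have e2 : ∀ σ, ∑ c, pderiv4 lam (fun y => (g y)⁻¹ i σ) x * (g x σ c * (g x)⁻¹ c j)
        = pderiv4 lam (fun y => (g y)⁻¹ i σ) x * (if σ = j then 1 else 0) := by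
      intro σ; rw [← Finset.mul_sum, L_gP hg_unit x σ j]
    simp only [e2]
    rw [collapse]
  rw [key]
  have e3 : ∀ c, (∑ σ, pderiv4 lam (fun y => (g y)⁻¹ i σ) x * g x σ c) * (g x)⁻¹ c j
      = -∑ σ, (g x)⁻¹ i σ * pderiv4 lam (fun y => g y σ c) x * (g x)⁻¹ c j := by
    intro c
    rw [hneg c, neg_mul, Finset.sum_mul]
  simp only [e3]
  rw [Finset.sum_neg_distrib, neg_inj]
  exact Finset.sum_comm
end Geo4

section Geo5
variable {g : (Fin 4 → ℝ) → Matrix (Fin 4) (Fin 4) ℝ} {A : (Fin 4 → ℝ) → Fin 4 → ℝ}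
variable (hg_symm : ∀ x, (g x).IsSymm) (hg_unit : ∀ x, IsUnit (g x).det)
variable (hg_smooth : ∀ μ ν, ContDiff ℝ 2 fun x => g x μ ν)
variable (hA_smooth : ∀ μ, ContDiff ℝ 1 fun x => A x μ)

include hg_symm hg_unit hg_smooth in
theorem E4a (x : Fin 4 → ℝ) (σ : Fin 4) :
    ∑ l, pderiv4 l (fun y => (g y)⁻¹ l σ) x
      = -(∑ m, ∑ l, (g x)⁻¹ m l * christoffel g x σ m l)
        - ∑ m, (∑ l, christoffel g x l m l) * (g x)⁻¹ m σ := by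
  have p1 : ∀ l k : Fin 4, ∑ m, (g x)⁻¹ l k * (∑ c, christoffel g x c l k * g x c m)
        * (g x)⁻¹ m σ = (g x)⁻¹ l k * christoffel g x σ l k := by
    intro l k
    have e : ∀ m, (g x)⁻¹ l k * (∑ c, christoffel g x c l k * g x c m) * (g x)⁻¹ m σ
        = ∑ c, (christoffel g x c l k * (g x)⁻¹ l k) * (g x c m * (g x)⁻¹ m σ) := by
      intro m
      rw [Finset.mul_sum, Finset.sum_mul]
      exact Finset.sum_congr rfl fun c _ => by ring
    simp only [e]
    rw [Finset.sum_comm]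
    have e2 : ∀ c, ∑ m, (christoffel g x c l k * (g x)⁻¹ l k) * (g x c m * (g x)⁻¹ m σ)
        = (christoffel g x c l k * (g x)⁻¹ l k) * (if c = σ then 1 else 0) := by
      intro c; rw [← Finset.mul_sum, L_gP hg_unit x c σ]
    simp only [e2]
    rw [collapse]
    ring
  have p2 : ∀ l m : Fin 4, ∑ k, (g x)⁻¹ l k * (∑ c, christoffel g x c l m * g x k c)
        * (g x)⁻¹ m σ = christoffel g x l l m * (g x)⁻¹ m σ := by
    intro l m
    have e : ∀ k, (g x)⁻¹ l k * (∑ c, christoffel g x c l m * g x k c) * (g x)⁻¹ m σ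
        = ∑ c, (christoffel g x c l m * (g x)⁻¹ m σ) * ((g x)⁻¹ l k * g x k c) := by
      intro k
      rw [Finset.mul_sum, Finset.sum_mul]
      exact Finset.sum_congr rfl fun c _ => by ring
    simp only [e]
    rw [Finset.sum_comm]
    have e2 : ∀ c, ∑ k, (christoffel g x c l m * (g x)⁻¹ m σ) * ((g x)⁻¹ l k * g x k c)
        = (christoffel g x c l m * (g x)⁻¹ m σ) * (if l = c then 1 else 0) := by
      intro c; rw [← Finset.mul_sum, L_Pg hg_unit x l c]
    simp only [e2]
    have e3 : ∀ c : Fin 4, (christoffel g x c l m * (g x)⁻¹ m σ) * (if l = c then 1 else 0)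
        = (christoffel g x c l m * (g x)⁻¹ m σ) * (if c = l then 1 else 0) := by
      intro c
      by_cases h : c = l
      · simp [h]
      · have h2 : ¬ l = c := fun hh => h hh.symm
        simp [h, h2]
    simp only [e3]
    rw [collapse]
  simp only [dPf hg_symm hg_unit hg_smooth x]
  simp only [hc3x hg_symm hg_unit x]
  have esplit : ∀ l k m : Fin 4, (g x)⁻¹ l k
      * ((∑ c, christoffel g x c l k * g x c m) + ∑ c, christoffel g x c l m * g x k c)
      * (g x)⁻¹ m σ
      = (g x)⁻¹ l k * (∑ c, christoffel g x c l k * g x c m) * (g x)⁻¹ m σ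
        + (g x)⁻¹ l k * (∑ c, christoffel g x c l m * g x k c) * (g x)⁻¹ m σ := by
    intro l k m; ring
  simp only [esplit, Finset.sum_add_distrib]
  have inner : ∀ l : Fin 4,
      (∑ k, ∑ m, (g x)⁻¹ l k * (∑ c, christoffel g x c l k * g x c m) * (g x)⁻¹ m σ)
        + ∑ k, ∑ m, (g x)⁻¹ l k * (∑ c, christoffel g x c l m * g x k c) * (g x)⁻¹ m σ
      = (∑ k, (g x)⁻¹ l k * christoffel g x σ l k)
        + ∑ m, christoffel g x l l m * (g x)⁻¹ m σ := by
    intro l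
    congr 1
    · exact Finset.sum_congr rfl fun k _ => p1 l k
    · rw [Finset.sum_comm]
      exact Finset.sum_congr rfl fun m _ => p2 l m
  simp only [inner]
  simp only [neg_add]
  rw [Finset.sum_add_distrib, Finset.sum_neg_distrib, Finset.sum_neg_distrib, sub_eq_add_neg]
  congr 1
  rw [neg_inj, Finset.sum_comm]
  apply Finset.sum_congr rfl
  intro m _
  rw [Finset.sum_mul]
  exact Finset.sum_congr rfl fun l _ => by rw [Γsym hg_symm x l l m]
end Geo5

section Geo6
variable {g : (Fin 4 → ℝ) → Matrix (Fin 4) (Fin 4) ℝ} {A : (Fin 4 → ℝ) → Fin 4 → ℝ}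
variable (hg_symm : ∀ x, (g x).IsSymm) (hg_unit : ∀ x, IsUnit (g x).det)
variable (hg_smooth : ∀ μ ν, ContDiff ℝ 2 fun x => g x μ ν)
variable (hA_smooth : ∀ μ, ContDiff ℝ 1 fun x => A x μ)

include hg_unit hg_smooth hA_smooth in
theorem dBx_eq (x : Fin 4 → ℝ) (lam l : Fin 4) :
    pderiv4 lam (fun y => Bf g A y l) x
      = ∑ σ, (pderiv4 lam (fun y => (g y)⁻¹ l σ) x * A x σ
          + (g x)⁻¹ l σ * pderiv4 lam (fun y => A y σ) x) := by
  unfold Bf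
  rw [pderiv4_sum (fun σ _ => ((Pd hg_unit hg_smooth l σ).fun_mul (Ad hA_smooth σ)).differentiableAt) lam]
  exact Finset.sum_congr rfl fun σ _ =>
    pderiv4_mul (Pd hg_unit hg_smooth l σ).differentiableAt (Ad hA_smooth σ).differentiableAt lam

include hg_symm hg_unit hg_smooth hA_smooth in
theorem hdvx (x : Fin 4 → ℝ) :
    divA g A x = ∑ l, pderiv4 l (fun y => Bf g A y l) x
      + ∑ c, (∑ l, christoffel g x l c l) * Bf g A x c := by
  simp only [dBx_eq hg_unit hg_smooth hA_smooth x]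
  simp only [Finset.sum_add_distrib]
  -- term1 : ∑_l ∑_σ dP l l σ * a σ
  have t1 : ∑ l, ∑ σ, pderiv4 l (fun y => (g y)⁻¹ l σ) x * A x σ
      = ∑ σ, (∑ l, pderiv4 l (fun y => (g y)⁻¹ l σ) x) * A x σ := by
    rw [Finset.sum_comm]
    exact Finset.sum_congr rfl fun σ _ => by rw [Finset.sum_mul]
  rw [t1]
  simp only [E4a hg_symm hg_unit hg_smooth x]
  -- expand divA
  unfold divA covDerivA
  have dlhs : ∀ l m : Fin 4, (g x)⁻¹ m l
        * (pderiv4 m (fun y => A y l) x - ∑ σ, christoffel g x σ m l * A x σ)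
      = (g x)⁻¹ m l * pderiv4 m (fun y => A y l) x
        - ∑ σ, (g x)⁻¹ m l * christoffel g x σ m l * A x σ := by
    intro l m
    rw [mul_sub, Finset.mul_sum]
    congr 1
    exact Finset.sum_congr rfl fun σ _ => by ring
  simp only [dlhs, Finset.sum_sub_distrib]
  -- match the two parts
  have m1 : ∑ l, ∑ m, (g x)⁻¹ m l * pderiv4 m (fun y => A y l) x
      = ∑ l, ∑ σ, (g x)⁻¹ l σ * pderiv4 l (fun y => A y σ) x := by
    exact Finset.sum_comm
  have m2 : ∑ σ, (-(∑ m, ∑ l, (g x)⁻¹ m l * christoffel g x σ m l)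
        - ∑ m, (∑ l, christoffel g x l m l) * (g x)⁻¹ m σ) * A x σ
      = -(∑ l, ∑ m, ∑ σ, (g x)⁻¹ m l * christoffel g x σ m l * A x σ)
        - ∑ c, (∑ l, christoffel g x l c l) * Bf g A x c := by
    have e : ∀ σ, (-(∑ m, ∑ l, (g x)⁻¹ m l * christoffel g x σ m l)
          - ∑ m, (∑ l, christoffel g x l m l) * (g x)⁻¹ m σ) * A x σ
        = -(∑ m, ∑ l, (g x)⁻¹ m l * christoffel g x σ m l * A x σ)
          - ∑ m, ((∑ l, christoffel g x l m l) * ((g x)⁻¹ m σ * A x σ)) := by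
      intro σ
      rw [sub_mul, neg_mul, Finset.sum_mul, Finset.sum_mul]
      congr 1
      · rw [neg_inj]
        exact Finset.sum_congr rfl fun m _ => by rw [Finset.sum_mul]
      · exact Finset.sum_congr rfl fun m _ => by ring
    simp only [e]
    rw [Finset.sum_sub_distrib, Finset.sum_neg_distrib]
    congr 1
    · rw [neg_inj]
      calc ∑ σ : Fin 4, ∑ m : Fin 4, ∑ l : Fin 4, (g x)⁻¹ m l * christoffel g x σ m l * A x σ
          = ∑ m : Fin 4, ∑ σ : Fin 4, ∑ l : Fin 4,
              (g x)⁻¹ m l * christoffel g x σ m l * A x σ := Finset.sum_comm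
        _ = ∑ m : Fin 4, ∑ l : Fin 4, ∑ σ : Fin 4,
              (g x)⁻¹ m l * christoffel g x σ m l * A x σ :=
            Finset.sum_congr rfl fun m _ => Finset.sum_comm
        _ = ∑ l : Fin 4, ∑ m : Fin 4, ∑ σ : Fin 4,
              (g x)⁻¹ m l * christoffel g x σ m l * A x σ := Finset.sum_comm
    · rw [Finset.sum_comm]
      apply Finset.sum_congr rfl
      intro m _
      rw [← Finset.mul_sum]
      rfl
  rw [m1, m2]
  ring
end Geo6

section Geo7
variable {g : (Fin 4 → ℝ) → Matrix (Fin 4) (Fin 4) ℝ} {A : (Fin 4 → ℝ) → Fin 4 → ℝ}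
variable (hg_symm : ∀ x, (g x).IsSymm) (hg_unit : ∀ x, IsUnit (g x).det)
variable (hg_smooth : ∀ μ ν, ContDiff ℝ 2 fun x => g x μ ν)
variable (hA_smooth : ∀ μ, ContDiff ℝ 1 fun x => A x μ)

theorem hnsqx (x : Fin 4 → ℝ) : normSqA g A x = ∑ l, A x l * Bf g A x l := by
  unfold normSqA Bf
  apply Finset.sum_congr rfl
  intro l _
  rw [Finset.mul_sum]
  exact Finset.sum_congr rfl fun m _ => by ring

include hg_symm hg_unit hg_smooth hA_smooth in
theorem dTf (x : Fin 4 → ℝ) (lam l m n : Fin 4) :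
    pderiv4 lam (fun y => Tf g A y l m n) x
      = (1/2) * (pderiv4 lam (fun y => A y m) x * (if l = n then 1 else 0)
          + pderiv4 lam (fun y => A y n) x * (if l = m then 1 else 0)
          - (pderiv4 lam (fun y => Bf g A y l) x * g x m n
             + Bf g A x l * pderiv4 lam (fun y => g y m n) x)) := by
  unfold Tf
  have d1 : DifferentiableAt ℝ (fun y => A y m * (if l = n then 1 else 0)) x :=
    ((Ad hA_smooth m).mul (differentiable_const _)).differentiableAt
  have d2 : DifferentiableAt ℝ (fun y => A y n * (if l = m then 1 else 0)) x :=
    ((Ad hA_smooth n).mul (differentiable_const _)).differentiableAt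
  have d3 : DifferentiableAt ℝ (fun y => Bf g A y l * g y m n) x :=
    ((Bfd hg_unit hg_smooth hA_smooth l).mul (gd hg_smooth m n)).differentiableAt
  rw [pderiv4_const_mul _ ((d1.fun_add d2).fun_sub d3), pderiv4_sub (d1.fun_add d2) d3,
    pderiv4_add d1 d2,
    pderiv4_mul (Ad hA_smooth m).differentiableAt (differentiableAt_const _),
    pderiv4_mul (Ad hA_smooth n).differentiableAt (differentiableAt_const _),
    pderiv4_mul (Bfd hg_unit hg_smooth hA_smooth l).differentiableAt
      (gd hg_smooth m n).differentiableAt,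
    pderiv4_const, pderiv4_const]
  ring

include hg_symm hg_unit hg_smooth hA_smooth in
theorem E1 (x : Fin 4 → ℝ) (μ ν : Fin 4) :
    ∑ l, pderiv4 ν (fun y => Tf g A y l l μ) x = 2 * pderiv4 ν (fun y => A y μ) x := by
  rw [← pderiv4_sum (fun l _ =>
    (Tfd hg_symm hg_unit hg_smooth hA_smooth l l μ).differentiableAt) ν]
  rw [pderiv4_congr (fun y =>
    sT1 (a := A y) (B := Bf g A y) (G := g y) (T := Tf g A y)
      (fun _ _ _ => rfl) (gsym hg_symm y) (hc2x hg_symm hg_unit y) μ) ν x]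
  exact pderiv4_const_mul 2 (Ad hA_smooth μ).differentiableAt ν

include hg_symm hg_unit hg_smooth hA_smooth in
theorem E2 (x : Fin 4 → ℝ) (μ ν : Fin 4) :
    ∑ l, pderiv4 l (fun y => Tf g A y l ν μ) x
      = (1/2) * (pderiv4 μ (fun y => A y ν) x + pderiv4 ν (fun y => A y μ) x
          - ∑ l, (pderiv4 l (fun y => Bf g A y l) x * g x ν μ
              + Bf g A x l * pderiv4 l (fun y => g y ν μ) x)) := by
  have e : ∀ l, pderiv4 l (fun y => Tf g A y l ν μ) x
      = (1/2) * (pderiv4 l (fun y => A y ν) x * (if l = μ then 1 else 0)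
          + pderiv4 l (fun y => A y μ) x * (if l = ν then 1 else 0)
          - (pderiv4 l (fun y => Bf g A y l) x * g x ν μ
             + Bf g A x l * pderiv4 l (fun y => g y ν μ) x)) :=
    fun l => dTf hg_symm hg_unit hg_smooth hA_smooth x l l ν μ
  simp only [e]
  rw [sum_half_split]
  rw [collapse (fun l => pderiv4 l (fun y => A y ν) x) μ,
    collapse (fun l => pderiv4 l (fun y => A y μ) x) ν]
  ring
end Geo7



theorem ricci_split {g : (Fin 4 → ℝ) → Matrix (Fin 4) (Fin 4) ℝ} {A : (Fin 4 → ℝ) → Fin 4 → ℝ}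
    (hg_symm : ∀ x, (g x).IsSymm) (hg_unit : ∀ x, IsUnit (g x).det)
    (hg_smooth : ∀ μ ν, ContDiff ℝ 2 fun x => g x μ ν)
    (hA_smooth : ∀ μ, ContDiff ℝ 1 fun x => A x μ)
    (x : Fin 4 → ℝ) (μ ν : Fin 4) :
    ricci (weylConn g A) x μ ν
      = ricci (christoffel g) x μ ν
        + (∑ l, pderiv4 ν (fun y => Tf g A y l l μ) x
           - ∑ l, pderiv4 l (fun y => Tf g A y l ν μ) x
           + ∑ l, ∑ c,
             (-(christoffel g x l c l * Tf g A x c ν μ)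
              - Tf g A x l c l * christoffel g x c ν μ
              + Tf g A x l c l * Tf g A x c ν μ
              + christoffel g x l c ν * Tf g A x c l μ
              + Tf g A x l c ν * christoffel g x c l μ
              - Tf g A x l c ν * Tf g A x c l μ)) := by
  simp only [ricci, riemann]
  have per : ∀ l : Fin 4,
      pderiv4 l (fun y => weylConn g A y l ν μ) x
        - pderiv4 ν (fun y => weylConn g A y l l μ) x
        + ∑ c, (weylConn g A x l c l * weylConn g A x c ν μ
            - weylConn g A x l c ν * weylConn g A x c l μ)
      = (pderiv4 l (fun y => christoffel g y l ν μ) x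
          - pderiv4 ν (fun y => christoffel g y l l μ) x
          + ∑ c, (christoffel g x l c l * christoffel g x c ν μ
              - christoffel g x l c ν * christoffel g x c l μ))
        + (pderiv4 ν (fun y => Tf g A y l l μ) x
            - pderiv4 l (fun y => Tf g A y l ν μ) x
            + ∑ c,
             (-(christoffel g x l c l * Tf g A x c ν μ)
              - Tf g A x l c l * christoffel g x c ν μ
              + Tf g A x l c l * Tf g A x c ν μ
              + christoffel g x l c ν * Tf g A x c l μ
              + Tf g A x l c ν * christoffel g x c l μ
              - Tf g A x l c ν * Tf g A x c l μ)) := by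
    intro l
    rw [pderiv4_congr (fun y => weyl_eq (A := A) hg_symm hg_unit y l ν μ) l x,
        pderiv4_congr (fun y => weyl_eq (A := A) hg_symm hg_unit y l l μ) ν x,
        pderiv4_sub (christoffeld hg_unit hg_smooth l ν μ).differentiableAt
          (Tfd hg_symm hg_unit hg_smooth hA_smooth l ν μ).differentiableAt l,
        pderiv4_sub (christoffeld hg_unit hg_smooth l l μ).differentiableAt
          (Tfd hg_symm hg_unit hg_smooth hA_smooth l l μ).differentiableAt ν]
    have eq2 : ∀ c : Fin 4,
        weylConn g A x l c l * weylConn g A x c ν μ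
          - weylConn g A x l c ν * weylConn g A x c l μ
        = (christoffel g x l c l * christoffel g x c ν μ
            - christoffel g x l c ν * christoffel g x c l μ)
          + (-(christoffel g x l c l * Tf g A x c ν μ)
              - Tf g A x l c l * christoffel g x c ν μ
              + Tf g A x l c l * Tf g A x c ν μ
              + christoffel g x l c ν * Tf g A x c l μ
              + Tf g A x l c ν * christoffel g x c l μ
              - Tf g A x l c ν * Tf g A x c l μ) := by
      intro c
      rw [weyl_eq hg_symm hg_unit x l c l, weyl_eq hg_symm hg_unit x c ν μ,
          weyl_eq hg_symm hg_unit x l c ν, weyl_eq hg_symm hg_unit x c l μ]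
      ring
    simp only [eq2]
    rw [Finset.sum_add_distrib]
    ring
  calc (∑ l, (pderiv4 l (fun y => weylConn g A y l ν μ) x
        - pderiv4 ν (fun y => weylConn g A y l l μ) x
        + ∑ c, (weylConn g A x l c l * weylConn g A x c ν μ
            - weylConn g A x l c ν * weylConn g A x c l μ)))
      = ∑ l, ((pderiv4 l (fun y => christoffel g y l ν μ) x
          - pderiv4 ν (fun y => christoffel g y l l μ) x
          + ∑ c, (christoffel g x l c l * christoffel g x c ν μ
              - christoffel g x l c ν * christoffel g x c l μ))
        + (pderiv4 ν (fun y => Tf g A y l l μ) x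
            - pderiv4 l (fun y => Tf g A y l ν μ) x
            + ∑ c,
             (-(christoffel g x l c l * Tf g A x c ν μ)
              - Tf g A x l c l * christoffel g x c ν μ
              + Tf g A x l c l * Tf g A x c ν μ
              + christoffel g x l c ν * Tf g A x c l μ
              + Tf g A x l c ν * christoffel g x c l μ
              - Tf g A x l c ν * Tf g A x c l μ))) :=
        Finset.sum_congr rfl fun l _ => per l
    _ = _ := by
        rw [Finset.sum_add_distrib]
        congr 1
        simp only [Finset.sum_add_distrib, Finset.sum_sub_distrib]


/-- Relation between the Ricci tensor of the Weyl connection and that of the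
Levi–Civita connection (abelian case), with `F_{μν} = ∂_μ A_ν − ∂_ν A_μ` and
`E_{μν} = ∇_μ A_ν + ∇_ν A_μ + 4 A_μ A_ν`:
`Ric[Γ̄]_{μν} = Ric[Γ]_{μν} + ½ g_{μν} (∇^λ A_λ − A^λ A_λ)
− (3/2) A_μ A_ν − F_{μν} + ½ E_{μν}`. -/
theorem weyl_ricci_tensor (g : (Fin 4 → ℝ) → Matrix (Fin 4) (Fin 4) ℝ)
    (A : (Fin 4 → ℝ) → Fin 4 → ℝ)
    (hg_symm : ∀ x, (g x).IsSymm) (hg_unit : ∀ x, IsUnit (g x).det)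
    (hg_smooth : ∀ μ ν, ContDiff ℝ 2 fun x => g x μ ν)
    (hA_smooth : ∀ μ, ContDiff ℝ 1 fun x => A x μ) :
    ∀ (x : Fin 4 → ℝ) (μ ν : Fin 4),
      ricci (weylConn g A) x μ ν
        = ricci (christoffel g) x μ ν
          + (1 / 2) * g x μ ν * (divA g A x - normSqA g A x)
          - (3 / 2) * (A x μ * A x ν)
          - (pderiv4 μ (fun y => A y ν) x - pderiv4 ν (fun y => A y μ) x)
          + (1 / 2) * (covDerivA g A x μ ν + covDerivA g A x ν μ
              + 4 * (A x μ * A x ν)) := by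
  intro x μ ν
  have hcore := core (a := A x) (B := Bf g A x)
    (dB := fun l => pderiv4 l (fun y => Bf g A y l) x)
    (da := fun lam m => pderiv4 lam (fun y => A y m) x)
    (G := g x) (dG := fun lam m n => pderiv4 lam (fun y => g y m n) x)
    (Γ := christoffel g x) (T := Tf g A x) (nsq := normSqA g A x) (dv := divA g A x)
    (fun _ _ _ => rfl) (gsym hg_symm x) (fun l i j => Γsym hg_symm x l i j)
    (hc2x hg_symm hg_unit x) (hnsqx x) (hc3x hg_symm hg_unit x)
    (hdvx hg_symm hg_unit hg_smooth hA_smooth x) μ ν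
  simp only [covDerivA]
  linear_combination (ricci_split hg_symm hg_unit hg_smooth hA_smooth x μ ν)
    + (E1 hg_symm hg_unit hg_smooth hA_smooth x μ ν)
    - (E2 hg_symm hg_unit hg_smooth hA_smooth x μ ν) + hcore
end
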